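/- Let n ≥ 2 and suppose p and q are distinct primes with n/2 < p ≤ n and n/2 < q ≤ n. Then p is a winning opening move for the first player in Juniper Green on {1, ..., n}; that is, Win({p}, p) fails in the snake-in-the-box game on the divisibility graph G_n. -/
import Mathlib


/-- `M` is a matching of `G`: a set of edges of `G`, no two of which share a vertex. -/
def IsMatching {V : Type*} (G : SimpleGraph V) (M : Finset (Sym2 V)) : Prop :=
  (∀ e ∈ M, e ∈ G.edgeSet) ∧
  ∀ e ∈ M, ∀ f ∈ M, e ≠ f → ∀ v : V, v ∈ e → v ∉ f

/-- The vertex `v` is covered by the matching `M`, i.e. it is an endpoint of an edge of `M`. -/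
def Covers {V : Type*} (M : Finset (Sym2 V)) (v : V) : Prop := ∃ e ∈ M, v ∈ e

/-- `M` is a maximum matching of `G`: a matching of maximum cardinality among all matchings. -/
def IsMaximumMatching {V : Type*} (G : SimpleGraph V) (M : Finset (Sym2 V)) : Prop :=
  IsMatching G M ∧ ∀ M' : Finset (Sym2 V), IsMatching G M' → M'.card ≤ M.card

/-- The snake-in-the-box winning predicate: `Win G S v` means the player about to move from
the position with visited set `S` and current vertex `v ∈ S` has a winning strategy.
`Win G S v` holds iff there is `w` adjacent to `v`, not yet visited, with `¬ Win G (insert w S) w`. -/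
def Win {V : Type*} [Fintype V] [DecidableEq V] (G : SimpleGraph V) (S : Finset V) (v : V) :
    Prop :=
  ∃ w : V, ∃ _ : G.Adj v w, ∃ _ : w ∉ S, ¬ Win G (insert w S) w
termination_by Sᶜ.card
decreasing_by
  simp only [Finset.compl_insert]
  exact Finset.card_erase_lt_of_mem (Finset.mem_compl.mpr (by assumption))

/-- The divisibility graph on `{1, …, n}`: distinct `i, j` are adjacent iff `i ∣ j` or `j ∣ i`. -/
def divGraph (n : ℕ) : SimpleGraph {m : ℕ // m ∈ Finset.Icc 1 n} :=
  SimpleGraph.fromRel (fun i j => (i : ℕ) ∣ (j : ℕ) ∨ (j : ℕ) ∣ (i : ℕ))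



lemma big_prime_nbr {n r : ℕ} (hr : r.Prime) (hr1 : n < 2 * r) (hv : r ∈ Finset.Icc 1 n)
    {w : {m : ℕ // m ∈ Finset.Icc 1 n}} (h : (divGraph n).Adj ⟨r, hv⟩ w) : (w : ℕ) = 1 := by
  rw [divGraph, SimpleGraph.fromRel_adj] at h
  obtain ⟨hne, hd⟩ := h
  have hw := Finset.mem_Icc.mp w.2
  have hwr : (w : ℕ) ≠ r := fun e => hne (Subtype.ext e.symm)
  have hdvd : r ∣ (w : ℕ) ∨ (w : ℕ) ∣ r := by tauto
  rcases hdvd with h | h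
  · exfalso
    obtain ⟨k, hk⟩ := h
    have hk1 : k ≠ 1 := by rintro rfl; omega
    have : 2 ≤ k := by rcases k with _|_|k <;> omega
    have : 2 * r ≤ r * k := by nlinarith
    omega
  · rcases (Nat.Prime.eq_one_or_self_of_dvd hr _ h) with h1 | h1
    · exact h1
    · exact absurd h1 hwr

/-- If `p, q` are distinct primes with `n/2 < p ≤ n` and `n/2 < q ≤ n`, then `p` is a
winning opening move for the first player in Juniper Green on `{1, …, n}`. -/
theorem large_prime_is_winning_opening (n p q : ℕ) (hn : 2 ≤ n)
    (hp : p.Prime) (hq : q.Prime) (hpq : p ≠ q)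
    (hp1 : n < 2 * p) (hp2 : p ≤ n) (hq1 : n < 2 * q) (hq2 : q ≤ n) :
    ¬ Win (divGraph n)
        {(⟨p, Finset.mem_Icc.mpr ⟨hp.one_lt.le, hp2⟩⟩ : {k : ℕ // k ∈ Finset.Icc 1 n})}
        ⟨p, Finset.mem_Icc.mpr ⟨hp.one_lt.le, hp2⟩⟩ := by
  set vp : {k : ℕ // k ∈ Finset.Icc 1 n} := ⟨p, Finset.mem_Icc.mpr ⟨hp.one_lt.le, hp2⟩⟩
  have h1n : (1 : ℕ) ∈ Finset.Icc 1 n := Finset.mem_Icc.mpr ⟨le_refl 1, by omega⟩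
  have hqn : q ∈ Finset.Icc 1 n := Finset.mem_Icc.mpr ⟨hq.one_lt.le, hq2⟩
  set v1 : {k : ℕ // k ∈ Finset.Icc 1 n} := ⟨1, h1n⟩
  set vq : {k : ℕ // k ∈ Finset.Icc 1 n} := ⟨q, hqn⟩
  intro hwin
  rw [Win] at hwin
  obtain ⟨w, hadj, hwS, hnw⟩ := hwin
  have hw1 : w = v1 := Subtype.ext (big_prime_nbr hp hp1 vp.2 hadj)
  subst hw1
  apply hnw
  rw [Win]
  refine ⟨vq, ?_, ?_, ?_⟩
  · rw [divGraph, SimpleGraph.fromRel_adj]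
    constructor
    · intro h
      have := congrArg Subtype.val h
      simp [v1, vq] at this
      omega
    · left; left; exact one_dvd _
  · simp only [Finset.mem_insert, Finset.mem_singleton]
    rintro (h | h)
    · exact hq.one_lt.ne' (congrArg Subtype.val h)
    · exact hpq (congrArg Subtype.val h).symm
  · intro hwq
    rw [Win] at hwq
    obtain ⟨u, huadj, huS, _⟩ := hwq
    have hu1 : u = v1 := Subtype.ext (big_prime_nbr hq hq1 hqn huadj)
    subst hu1
    exact huS (by simp)
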